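/- In every interval representation of G_β, at least one endpoint of the interval of the added vertex u is contained in no interval of a vertex of G. -/

import Mathlib

open Set

/-- An interval representation of a simple graph `G`: each vertex `v` gets a nonempty
closed interval `[l v, r v] ⊆ ℝ`, and two distinct vertices are adjacent iff their
intervals intersect. -/
structure IntervalRep {V : Type*} (G : SimpleGraph V) where
  l : V → ℝ
  r : V → ℝ
  le : ∀ v, l v ≤ r v
  adj_iff : ∀ u v : V, u ≠ v →
    (G.Adj u v ↔ (Icc (l u) (r u) ∩ Icc (l v) (r v)).Nonempty)

namespace IntervalRep

variable {V : Type*} {G : SimpleGraph V}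

/-- The interval of a vertex. -/
def itv (R : IntervalRep G) (v : V) : Set ℝ := Icc (R.l v) (R.r v)

/-- The nesting `ν(R)`: the maximum length of a chain of strictly nested vertex intervals. -/
noncomputable def nesting (R : IntervalRep G) : ℕ :=
  sSup {k : ℕ | ∃ f : Fin k → V, ∀ i j : Fin k, i < j → R.itv (f i) ⊂ R.itv (f j)}

/-- `ν_R(x)`: the maximum length of a chain of strictly nested vertex intervals whose
outermost interval is `I(x)` (counting `x` itself). -/
noncomputable def nuAt (R : IntervalRep G) (x : V) : ℕ :=
  sSup {k : ℕ | ∃ f : Fin k → V,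
    (∀ i j : Fin k, i < j → R.itv (f i) ⊂ R.itv (f j)) ∧
    ∃ h : 0 < k, f ⟨k - 1, by omega⟩ = x}

end IntervalRep

/-- A graph is an interval graph if it admits an interval representation. -/
def IsIntervalGraph {V : Type*} (G : SimpleGraph V) : Prop := Nonempty (IntervalRep G)

/-- The nesting number `ν(G)`: the minimum nesting over all interval representations. -/
noncomputable def nu {V : Type*} (G : SimpleGraph V) : ℕ :=
  sInf {n : ℕ | ∃ R : IntervalRep G, R.nesting = n}

/-- `G_α`: add vertices `u, a₁, a₂, b₁, b₂` (coded as `0,1,2,3,4`), with `u` adjacent to all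
of `G` and to `a₁, b₁`; `a₁ ~ a₂` and `b₁ ~ b₂`. -/
def Galpha {V : Type*} (G : SimpleGraph V) : SimpleGraph (V ⊕ Fin 5) :=
  SimpleGraph.fromRel fun x y =>
    match x, y with
    | Sum.inl a, Sum.inl b => G.Adj a b
    | Sum.inl _, Sum.inr i => i = 0
    | Sum.inr _, Sum.inl _ => False
    | Sum.inr i, Sum.inr j =>
        i = 0 ∧ j = 1 ∨ i = 1 ∧ j = 2 ∨ i = 0 ∧ j = 3 ∨ i = 3 ∧ j = 4

/-- `G_β`: add vertices `u, a₁, a₂` (coded as `0,1,2`), with `u` adjacent to all of `G`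
and to `a₁`; `a₁ ~ a₂`. -/
def Gbeta {V : Type*} (G : SimpleGraph V) : SimpleGraph (V ⊕ Fin 3) :=
  SimpleGraph.fromRel fun x y =>
    match x, y with
    | Sum.inl a, Sum.inl b => G.Adj a b
    | Sum.inl _, Sum.inr i => i = 0
    | Sum.inr _, Sum.inl _ => False
    | Sum.inr i, Sum.inr j => i = 0 ∧ j = 1 ∨ i = 1 ∧ j = 2

/-- `G_γ`: add vertices `u, v, a₁, a₂, b₁, b₂` (coded as `0,1,2,3,4,5`), with `u ~ v`, both
adjacent to all of `G`; `u ~ a₁`, `a₁ ~ a₂`, `v ~ b₁`, `b₁ ~ b₂`. -/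
def Ggamma {V : Type*} (G : SimpleGraph V) : SimpleGraph (V ⊕ Fin 6) :=
  SimpleGraph.fromRel fun x y =>
    match x, y with
    | Sum.inl a, Sum.inl b => G.Adj a b
    | Sum.inl _, Sum.inr i => i = 0 ∨ i = 1
    | Sum.inr _, Sum.inl _ => False
    | Sum.inr i, Sum.inr j =>
        i = 0 ∧ j = 1 ∨ i = 0 ∧ j = 2 ∨ i = 2 ∧ j = 3 ∨ i = 1 ∧ j = 4 ∨ i = 4 ∧ j = 5

/-- The disjoint union of a family of graphs, on the sigma type of their vertex sets. -/
def sigmaGraph {p : ℕ} {V : Fin p → Type*} (G : ∀ i, SimpleGraph (V i)) :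
    SimpleGraph (Σ i, V i) :=
  SimpleGraph.fromRel fun x y => ∃ h : x.1 = y.1, (G y.1).Adj (h ▸ x.2) y.2

/-- The graph obtained from `H` by adding one new vertex adjacent to every vertex of `H`. -/
def joinVertex {W : Type*} (H : SimpleGraph W) : SimpleGraph (W ⊕ Unit) :=
  SimpleGraph.fromRel fun x y =>
    match x, y with
    | Sum.inl a, Sum.inl b => H.Adj a b
    | Sum.inl _, Sum.inr _ => True
    | _, _ => False

/-- in every representation of `G_β`, at least one endpoint of `I(u)` is
contained in no interval of a vertex of `G`. -/
theorem stmt_4 {V : Type*} [Fintype V] (G : SimpleGraph V)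
    (R : IntervalRep (Gbeta G)) :
    (∀ x : V, R.l (Sum.inr 0) ∉ R.itv (Sum.inl x)) ∨
    (∀ x : V, R.r (Sum.inr 0) ∉ R.itv (Sum.inl x)) := by
  by_contra h
  push_neg at h
  obtain ⟨⟨x, hx⟩, ⟨y, hy⟩⟩ := h
  -- adjacency facts
  have hadj01 : (Gbeta G).Adj (Sum.inr 0) (Sum.inr 1) := by
    simp [Gbeta, SimpleGraph.fromRel_adj]
  have hadj12 : (Gbeta G).Adj (Sum.inr 1) (Sum.inr 2) := by
    simp [Gbeta, SimpleGraph.fromRel_adj]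
  have hnadj02 : ¬ (Gbeta G).Adj ((Sum.inr 0 : V ⊕ Fin 3)) (Sum.inr 2) := by
    simp [Gbeta, SimpleGraph.fromRel_adj]
  have hnadj1 : ∀ z : V, ¬ (Gbeta G).Adj (Sum.inr 1) (Sum.inl z) := by
    intro z
    simp [Gbeta, SimpleGraph.fromRel_adj]
  obtain ⟨p, hp⟩ := (R.adj_iff _ _ (by simp)).mp hadj01
  obtain ⟨q, hq⟩ := (R.adj_iff _ _ (by simp)).mp hadj12
  have hempty02 : ¬ (Icc (R.l (Sum.inr 0)) (R.r (Sum.inr 0)) ∩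
      Icc (R.l (Sum.inr 2)) (R.r (Sum.inr 2))).Nonempty := fun hn =>
    hnadj02 ((R.adj_iff _ _ (by simp)).mpr hn)
  have hempty1 : ∀ z : V, ¬ (Icc (R.l (Sum.inr 1)) (R.r (Sum.inr 1)) ∩
      Icc (R.l (Sum.inl z)) (R.r (Sum.inl z))).Nonempty := fun z hn =>
    hnadj1 z ((R.adj_iff _ _ (by simp)).mpr hn)
  simp only [IntervalRep.itv, mem_Icc] at hx hy
  obtain ⟨⟨hp1, hp2⟩, hp3, hp4⟩ := hp
  obtain ⟨⟨hq1, hq2⟩, hq3, hq4⟩ := hq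
  -- l u < l a₁
  have hl : R.l (Sum.inr 0) < R.l (Sum.inr 1) := by
    by_contra hle
    push_neg at hle
    exact hempty1 x ⟨R.l (Sum.inr 0), ⟨hle, le_trans hp1 hp4⟩, hx⟩
  -- r a₁ < r u
  have hr : R.r (Sum.inr 1) < R.r (Sum.inr 0) := by
    by_contra hle
    push_neg at hle
    exact hempty1 y ⟨R.r (Sum.inr 0), ⟨le_trans hp3 hp2, hle⟩, hy⟩
  exact hempty02 ⟨q, ⟨le_trans hl.le hq1, le_trans hq2 hr.le⟩, hq3, hq4⟩
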